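/- For every graph H, the graph G = H ∘ K̄₂ (the corona of H with the empty graph on 2 vertices) has domination polynomial D(G,x) = x^{n/3}(x² + 3x + 1)^{n/3}, where n = |V(G)|; in particular, -φ² = -(3+√5)/2 is a domination root of G. -/

import Mathlib

open SimpleGraph Polynomial

noncomputable def phi : ℝ := (1 + Real.sqrt 5) / 2

/-- `S` is a dominating set of `G`. -/
def IsDominatingSet {V : Type*} (G : SimpleGraph V) (S : Finset V) : Prop :=
  ∀ v ∉ S, ∃ u ∈ S, G.Adj u v

/-- The domination polynomial `D(G,x) = Σₖ d(G,k) xᵏ`. -/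
noncomputable def dominationPolynomial {V : Type*} [Fintype V] (G : SimpleGraph V) :
    Polynomial ℝ :=
  ∑ k ∈ Finset.range (Fintype.card V + 1),
    Polynomial.C ((Nat.card {S : Finset V // IsDominatingSet G S ∧ S.card = k} : ℝ)) *
      Polynomial.X ^ k

/-- The corona `H ∘ K̄₂`: one copy of `H`, and for each vertex of `H` two new
pendant vertices joined to it (the copies of the empty graph on two vertices). -/
def coronaKbar2 {V : Type*} (H : SimpleGraph V) : SimpleGraph (V ⊕ V × Fin 2) where
  Adj x y :=
    match x, y with
    | .inl a, .inl b => H.Adj a b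
    | .inl a, .inr (b, _) => a = b
    | .inr (a, _), .inl b => a = b
    | .inr _, .inr _ => False
  symm := ⟨by rintro (a | ⟨a, i⟩) (b | ⟨b, j⟩) h <;> simp_all [SimpleGraph.adj_comm, eq_comm]⟩
  loopless := ⟨by rintro (a | ⟨a, i⟩) h <;> simp_all⟩

open Classical in
lemma domPoly_eq_sum {W : Type*} [Fintype W] (G : SimpleGraph W) :
    dominationPolynomial G =
      ∑ S ∈ Finset.univ.filter (fun S : Finset W => IsDominatingSet G S), (X : ℝ[X]) ^ S.card := by
  classical
  rw [dominationPolynomial,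
    ← Finset.sum_fiberwise_of_maps_to (g := Finset.card)
      (t := Finset.range (Fintype.card W + 1))
      (fun S _ => Finset.mem_range.2 (Nat.lt_succ_of_le (S.card_le_univ.trans_eq Finset.card_univ)))
      (fun S => (X : ℝ[X]) ^ S.card)]
  refine Finset.sum_congr rfl fun k _ => ?_
  rw [Finset.sum_congr rfl (fun S hS => by rw [(Finset.mem_filter.1 hS).2]),
    Finset.sum_const, nsmul_eq_mul, Finset.filter_filter]
  congr 1
  rw [Nat.card_eq_fintype_card, Fintype.card_subtype]
  norm_num

section Corona
variable {V : Type*} [Fintype V] [DecidableEq V]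

def vert (v : V) (j : Fin 3) : V ⊕ V × Fin 2 :=
  match j with
  | ⟨0, _⟩ => .inl v
  | ⟨1, _⟩ => .inr (v, 0)
  | ⟨2, _⟩ => .inr (v, 1)

omit [Fintype V] [DecidableEq V] in
lemma vert_inj {v w : V} {j k : Fin 3} : vert v j = vert w k ↔ v = w ∧ j = k := by
  constructor
  · intro h
    fin_cases j <;> fin_cases k <;> simp_all [vert]
  · rintro ⟨rfl, rfl⟩; rfl

def Fp (p : V → Finset (Fin 3)) : Finset (V ⊕ V × Fin 2) :=
  Finset.univ.biUnion fun v => (p v).image (vert v)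

@[simp] lemma mem_Fp (p : V → Finset (Fin 3)) (v : V) (j : Fin 3) :
    vert v j ∈ Fp p ↔ j ∈ p v := by
  simp only [Fp, Finset.mem_biUnion, Finset.mem_image, Finset.mem_univ, true_and]
  constructor
  · rintro ⟨w, k, hk, h⟩
    obtain ⟨rfl, rfl⟩ := vert_inj.1 h.symm
    exact hk
  · exact fun h => ⟨v, j, h, rfl⟩

lemma card_Fp (p : V → Finset (Fin 3)) : (Fp p).card = ∑ v, (p v).card := by
  rw [Fp, Finset.card_biUnion]
  · exact Finset.sum_congr rfl fun v _ => Finset.card_image_of_injective _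
      (fun j k h => (vert_inj.1 h).2)
  · intro v _ w _ hvw
    simp only [Finset.disjoint_left, Finset.mem_image]
    rintro x ⟨j, hj, rfl⟩ ⟨k, hk, h⟩
    exact hvw (vert_inj.1 h.symm).1

noncomputable def Ip (S : Finset (V ⊕ V × Fin 2)) : V → Finset (Fin 3) :=
  fun v => Finset.univ.filter (fun j => vert v j ∈ S)

@[simp] lemma mem_Ip (S : Finset (V ⊕ V × Fin 2)) (v : V) (j : Fin 3) :
    j ∈ Ip S v ↔ vert v j ∈ S := by simp [Ip]

lemma Fp_Ip (S : Finset (V ⊕ V × Fin 2)) : Fp (Ip S) = S := by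
  ext x
  rcases x with v | ⟨v, i⟩
  · rw [show (Sum.inl v : V ⊕ V × Fin 2) = vert v 0 from rfl, mem_Fp, mem_Ip]
  · fin_cases i <;> simp only [Fin.zero_eta, Fin.mk_one]
    · rw [show (Sum.inr (v, 0) : V ⊕ V × Fin 2) = vert v 1 from rfl, mem_Fp, mem_Ip]
    · rw [show (Sum.inr (v, 1) : V ⊕ V × Fin 2) = vert v 2 from rfl, mem_Fp, mem_Ip]

lemma Ip_Fp (p : V → Finset (Fin 3)) : Ip (Fp p) = p := by
  funext v; ext j; simp

omit [DecidableEq V] in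
lemma dom_iff (H : SimpleGraph V) (S : Finset (V ⊕ V × Fin 2)) :
    IsDominatingSet (coronaKbar2 H) S ↔
      ∀ v : V, Sum.inl v ∈ S ∨ (Sum.inr (v, 0) ∈ S ∧ Sum.inr (v, 1) ∈ S) := by
  constructor
  · intro h v
    by_cases hv : Sum.inl v ∈ S
    · exact Or.inl hv
    have key : ∀ i : Fin 2, Sum.inr (v, i) ∈ S := by
      intro i
      by_contra hi
      obtain ⟨u, hu, hadj⟩ := h _ hi
      rcases u with w | ⟨w, k⟩
      · have : w = v := hadj
        subst this
        exact hv hu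
      · exact hadj
    exact Or.inr ⟨key 0, key 1⟩
  · intro h x hx
    rcases x with v | ⟨v, i⟩
    · rcases h v with hv | ⟨h0, _⟩
      · exact absurd hv hx
      · exact ⟨Sum.inr (v, 0), h0, show v = v from rfl⟩
    · rcases h v with hv | ⟨h0, h1⟩
      · exact ⟨Sum.inl v, hv, show v = v from rfl⟩
      · have : Sum.inr (v, i) ∈ S := by fin_cases i; exacts [h0, h1]
        exact absurd this hx

/-- The allowed traces on one block. -/
def A3 : Finset (Finset (Fin 3)) :=
  Finset.univ.filter (fun T => 0 ∈ T ∨ (1 ∈ T ∧ 2 ∈ T))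

open Classical in
lemma sum_dom (H : SimpleGraph V) :
    ∑ S ∈ Finset.univ.filter
        (fun S : Finset (V ⊕ V × Fin 2) => IsDominatingSet (coronaKbar2 H) S),
        (X : ℝ[X]) ^ S.card =
      ∑ p ∈ Fintype.piFinset (fun _ : V => A3), (X : ℝ[X]) ^ (∑ v, (p v).card) := by
  refine Finset.sum_nbij' (fun S => Ip S) (fun p => Fp p) ?_ ?_ ?_ ?_ ?_
  · intro S hS
    rw [Finset.mem_filter] at hS
    rw [Fintype.mem_piFinset]
    intro v
    rw [A3, Finset.mem_filter]
    refine ⟨Finset.mem_univ _, ?_⟩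
    simp only [mem_Ip]
    exact (dom_iff H S).1 hS.2 v
  · intro p hp
    rw [Fintype.mem_piFinset] at hp
    rw [Finset.mem_filter]
    refine ⟨Finset.mem_univ _, (dom_iff H _).2 fun v => ?_⟩
    have hv := hp v
    rw [A3, Finset.mem_filter] at hv
    rcases hv.2 with h0 | ⟨h1, h2⟩
    · exact Or.inl ((mem_Fp p v 0).2 h0)
    · exact Or.inr ⟨(mem_Fp p v 1).2 h1, (mem_Fp p v 2).2 h2⟩
  · intro S _; exact Fp_Ip S
  · intro p _; exact Ip_Fp p
  · intro S _
    conv_lhs => rw [← Fp_Ip S]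
    rw [card_Fp]

lemma sum_A3 : ∑ T ∈ A3, (X : ℝ[X]) ^ T.card =
    X * (X ^ 2 + 3 * X + 1) := by
  have hA : A3 = ({{0}, {0, 1}, {0, 2}, {0, 1, 2}, {1, 2}} : Finset (Finset (Fin 3))) := by
    decide
  rw [hA, Finset.sum_insert (by decide), Finset.sum_insert (by decide),
    Finset.sum_insert (by decide), Finset.sum_insert (by decide), Finset.sum_singleton]
  norm_num [show ({0} : Finset (Fin 3)).card = 1 from rfl,
    show ({0, 1} : Finset (Fin 3)).card = 2 from rfl,
    show ({0, 2} : Finset (Fin 3)).card = 2 from rfl,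
    show ({0, 1, 2} : Finset (Fin 3)).card = 3 from rfl,
    show ({1, 2} : Finset (Fin 3)).card = 2 from rfl]
  ring

end Corona

theorem dominationPolynomial_coronaKbar2 {V : Type*} [Fintype V] (H : SimpleGraph V)
    (n : ℕ) (hn : n = Fintype.card (V ⊕ V × Fin 2)) :
    dominationPolynomial (coronaKbar2 H) =
      Polynomial.X ^ (n / 3) * (Polynomial.X ^ 2 + 3 * Polynomial.X + 1) ^ (n / 3) ∧
      (Nonempty V → (dominationPolynomial (coronaKbar2 H)).eval (-(phi ^ 2)) = 0) := by
  classical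
  have hcard : Fintype.card (V ⊕ V × Fin 2) = 3 * Fintype.card V := by
    simp [Fintype.card_sum, Fintype.card_prod]
    ring
  have hdiv : n / 3 = Fintype.card V := by omega
  have main : dominationPolynomial (coronaKbar2 H) =
      Polynomial.X ^ (n / 3) * (Polynomial.X ^ 2 + 3 * Polynomial.X + 1) ^ (n / 3) := by
    rw [domPoly_eq_sum, sum_dom]
    have : ∀ p : V → Finset (Fin 3),
        (X : ℝ[X]) ^ (∑ v, (p v).card) = ∏ v, (X : ℝ[X]) ^ (p v).card := by
      intro p
      rw [Finset.prod_pow_eq_pow_sum]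
    simp_rw [this]
    rw [← Finset.prod_univ_sum (t := fun _ : V => A3)
      (f := fun _ (T : Finset (Fin 3)) => (X : ℝ[X]) ^ T.card), Finset.prod_const, sum_A3, Finset.card_univ, hdiv, mul_pow]
  refine ⟨main, fun hV => ?_⟩
  rw [main]
  have hroot : ((X : ℝ[X]) ^ 2 + 3 * X + 1).eval (-(phi ^ 2)) = 0 := by
    have h5 : Real.sqrt 5 ^ 2 = 5 := Real.sq_sqrt (by norm_num)
    simp only [eval_add, eval_mul, eval_pow, eval_X, eval_one, eval_ofNat, phi]
    nlinarith [h5]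
  have hm : n / 3 ≠ 0 := by
    rw [hdiv]
    exact Fintype.card_ne_zero
  rw [eval_mul, eval_pow, eval_pow, hroot, zero_pow hm, mul_zero]
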